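/- Let n ≥ 1 be an integer and let S ⊂ ℤ² be a finite set with |S| = n² such that the subgraph of the square-lattice graph ℒ induced on S is connected. Then the number of edges of this induced subgraph is at most 2n(n−1); consequently its cycle rank E − n² + 1 is at most (n−1)². -/

import Mathlib

/-- The square-lattice graph on `ℤ²`: `u` and `v` are adjacent iff
`|u₁ - v₁| + |u₂ - v₂| = 1`. -/
def latticeGraph : SimpleGraph (ℤ × ℤ) where
  Adj u v := |u.1 - v.1| + |u.2 - v.2| = 1
  symm := by
    constructor
    intro u v h
    rw [abs_sub_comm v.1, abs_sub_comm v.2]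
    exact h
  loopless := by
    constructor
    intro u h
    simp at h

lemma lattice_adj_cases {a b : ℤ × ℤ} (h : latticeGraph.Adj a b) :
    b = (a.1 + 1, a.2) ∨ a = (b.1 + 1, b.2) ∨ b = (a.1, a.2 + 1) ∨ a = (b.1, b.2 + 1) := by
  have h' : |a.1 - b.1| + |a.2 - b.2| = 1 := h
  rw [Int.abs_eq_natAbs, Int.abs_eq_natAbs] at h'
  simp only [Prod.ext_iff]
  omega

/-- canonical representation of an edge: lower endpoint and orientation -/
noncomputable def edgeRep : Sym2 (ℤ × ℤ) → (ℤ × ℤ) × Bool :=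
  Sym2.lift ⟨fun a b => ((min a.1 b.1, min a.2 b.2), decide (a.2 = b.2)), by
    intro a b
    simp [min_comm, eq_comm]⟩

lemma edgeRep_spec {a b : ℤ × ℤ} (h : latticeGraph.Adj a b) :
    ∃ p : ℤ × ℤ,
      (edgeRep s(a, b) = (p, true) ∧ s(a, b) = s(p, (p.1 + 1, p.2))) ∨
      (edgeRep s(a, b) = (p, false) ∧ s(a, b) = s(p, (p.1, p.2 + 1))) := by
  rcases lattice_adj_cases h with hc | hc | hc | hc
  · refine ⟨a, Or.inl ⟨?_, by rw [hc]⟩⟩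
    subst hc
    simp [edgeRep, min_eq_left (by omega : a.1 ≤ a.1 + 1)]
  · refine ⟨b, Or.inl ⟨?_, by rw [hc, Sym2.eq_swap]⟩⟩
    subst hc
    simp [edgeRep, min_eq_right (by omega : b.1 ≤ b.1 + 1)]
  · refine ⟨a, Or.inr ⟨?_, by rw [hc]⟩⟩
    subst hc
    simp [edgeRep, min_eq_left (by omega : a.2 ≤ a.2 + 1)]
  · refine ⟨b, Or.inr ⟨?_, by rw [hc, Sym2.eq_swap]⟩⟩
    subst hc
    simp [edgeRep, min_eq_right (by omega : b.2 ≤ b.2 + 1)]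

theorem induced_grid_edge_bound (n : ℕ) (hn : 1 ≤ n) (S : Set (ℤ × ℤ))
    (hfin : S.Finite) (hcard : S.ncard = n ^ 2)
    (hconn : (latticeGraph.induce S).Connected) :
    (latticeGraph.induce S).edgeSet.ncard ≤ 2 * n * (n - 1) ∧
    ((latticeGraph.induce S).edgeSet.ncard : ℤ) - (n : ℤ) ^ 2 + 1 ≤ ((n : ℤ) - 1) ^ 2 := by
  classical
  set G := latticeGraph.induce S with hG
  set T : Finset (ℤ × ℤ) := hfin.toFinset with hT
  have hTcard : T.card = n ^ 2 := by
    rw [hT, ← Set.ncard_eq_toFinset_card S hfin, hcard]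
  -- the edge set, pushed to Sym2 (ℤ × ℤ)
  set ES : Set (Sym2 (ℤ × ℤ)) := Sym2.map (Subtype.val) '' G.edgeSet with hES
  have hEScard : ES.ncard = G.edgeSet.ncard :=
    Set.ncard_image_of_injective _ (Sym2.map.injective Subtype.val_injective)
  have hESmem : ∀ e ∈ ES, ∃ a b : ℤ × ℤ, a ∈ S ∧ b ∈ S ∧ latticeGraph.Adj a b ∧ e = s(a, b) := by
    rintro e ⟨f, hf, rfl⟩
    induction f with
    | _ u v =>
      refine ⟨u.val, v.val, u.2, v.2, ?_, rfl⟩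
      simpa [hG] using hf
  -- horizontal / vertical "left/bottom endpoint" sets
  set Hs : Finset (ℤ × ℤ) := T.filter (fun p => (p.1 + 1, p.2) ∈ S) with hHs
  set Vs : Finset (ℤ × ℤ) := T.filter (fun p => (p.1, p.2 + 1) ∈ S) with hVs
  set t : Finset ((ℤ × ℤ) × Bool) :=
    Hs.image (fun p => (p, true)) ∪ Vs.image (fun p => (p, false)) with ht
  have hmaps : ∀ e ∈ ES, edgeRep e ∈ (t : Set ((ℤ × ℤ) × Bool)) := by
    intro e he
    obtain ⟨a, b, haS, hbS, hadj, rfl⟩ := hESmem e he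
    obtain ⟨p, ⟨hrep, heq⟩ | ⟨hrep, heq⟩⟩ := edgeRep_spec hadj
    · rw [hrep]
      have hmem : p ∈ S ∧ (p.1 + 1, p.2) ∈ S := by
        rcases Sym2.eq_iff.mp heq with ⟨h1, h2⟩ | ⟨h1, h2⟩
        · exact ⟨h1 ▸ haS, h2 ▸ hbS⟩
        · exact ⟨h2 ▸ hbS, h1 ▸ haS⟩
      simp only [ht, Finset.coe_union, Set.mem_union, Finset.coe_image, Set.mem_image]
      exact Or.inl ⟨p, by simp [hHs, hT, hmem.1, hmem.2], rfl⟩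
    · rw [hrep]
      have hmem : p ∈ S ∧ (p.1, p.2 + 1) ∈ S := by
        rcases Sym2.eq_iff.mp heq with ⟨h1, h2⟩ | ⟨h1, h2⟩
        · exact ⟨h1 ▸ haS, h2 ▸ hbS⟩
        · exact ⟨h2 ▸ hbS, h1 ▸ haS⟩
      simp only [ht, Finset.coe_union, Set.mem_union, Finset.coe_image, Set.mem_image]
      exact Or.inr ⟨p, by simp [hVs, hT, hmem.1, hmem.2], rfl⟩
  have hinj : Set.InjOn edgeRep ES := by
    intro e1 he1 e2 he2 heq
    obtain ⟨a1, b1, -, -, hadj1, rfl⟩ := hESmem e1 he1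
    obtain ⟨a2, b2, -, -, hadj2, rfl⟩ := hESmem e2 he2
    obtain ⟨p1, ⟨hr1, hq1⟩ | ⟨hr1, hq1⟩⟩ := edgeRep_spec hadj1 <;>
      obtain ⟨p2, ⟨hr2, hq2⟩ | ⟨hr2, hq2⟩⟩ := edgeRep_spec hadj2 <;>
      rw [hr1, hr2] at heq <;>
      simp only [Prod.mk.injEq] at heq
    · rw [hq1, hq2, heq.1]
    · exact absurd heq.2 (by simp)
    · exact absurd heq.2 (by simp)
    · rw [hq1, hq2, heq.1]
  have hEle : ES.ncard ≤ Hs.card + Vs.card := by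
    calc ES.ncard ≤ (t : Set ((ℤ × ℤ) × Bool)).ncard :=
          Set.ncard_le_ncard_of_injOn _ hmaps hinj (t.finite_toSet)
      _ = t.card := by rw [Set.ncard_coe_finset]
      _ ≤ (Hs.image (fun p => (p, true))).card + (Vs.image (fun p => (p, false))).card :=
          Finset.card_union_le _ _
      _ ≤ Hs.card + Vs.card := by
          gcongr <;> exact Finset.card_image_le
  -- rows and columns
  set rows : Finset ℤ := T.image Prod.snd with hrows
  set cols : Finset ℤ := T.image Prod.fst with hcols
  have hrowbound : Hs.card + rows.card ≤ T.card := by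
    have hsplit : Hs.card + (T.filter (fun p => ¬ (p.1 + 1, p.2) ∈ S)).card = T.card :=
      Finset.card_filter_add_card_filter_not _
    have hsurj : rows.card ≤ (T.filter (fun p => ¬ (p.1 + 1, p.2) ∈ S)).card := by
      apply Finset.card_le_card_of_surjOn Prod.snd
      intro y hy
      simp only [hrows, Finset.coe_image, Set.mem_image, Finset.mem_coe] at hy
      obtain ⟨q, hq, rfl⟩ := hy
      have hne : (T.filter (fun p => p.2 = q.2)).Nonempty := ⟨q, by simp [hq]⟩
      obtain ⟨m, hm, hmax⟩ := Finset.exists_max_image _ Prod.fst hne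
      simp only [Finset.mem_filter] at hm
      refine ⟨m, ?_, hm.2⟩
      simp only [Finset.coe_filter, Set.mem_setOf_eq]
      refine ⟨hm.1, fun hc => ?_⟩
      have : (m.1 + 1, m.2) ∈ T.filter (fun p => p.2 = q.2) := by
        exact Finset.mem_filter.mpr ⟨hfin.mem_toFinset.mpr hc, hm.2⟩
      have := hmax _ this
      simp at this
    omega
  have hcolbound : Vs.card + cols.card ≤ T.card := by
    have hsplit : Vs.card + (T.filter (fun p => ¬ (p.1, p.2 + 1) ∈ S)).card = T.card :=
      Finset.card_filter_add_card_filter_not _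
    have hsurj : cols.card ≤ (T.filter (fun p => ¬ (p.1, p.2 + 1) ∈ S)).card := by
      apply Finset.card_le_card_of_surjOn Prod.fst
      intro x hx
      simp only [hcols, Finset.coe_image, Set.mem_image, Finset.mem_coe] at hx
      obtain ⟨q, hq, rfl⟩ := hx
      have hne : (T.filter (fun p => p.1 = q.1)).Nonempty := ⟨q, by simp [hq]⟩
      obtain ⟨m, hm, hmax⟩ := Finset.exists_max_image _ Prod.snd hne
      simp only [Finset.mem_filter] at hm
      refine ⟨m, ?_, hm.2⟩
      simp only [Finset.coe_filter, Set.mem_setOf_eq]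
      refine ⟨hm.1, fun hc => ?_⟩
      have : (m.1, m.2 + 1) ∈ T.filter (fun p => p.1 = q.1) := by
        exact Finset.mem_filter.mpr ⟨hfin.mem_toFinset.mpr hc, hm.2⟩
      have := hmax _ this
      simp at this
    omega
  -- rows * cols ≥ n²
  have hrc : n ^ 2 ≤ cols.card * rows.card := by
    rw [← hTcard, ← Finset.card_product]
    apply Finset.card_le_card
    intro p hp
    rw [Finset.mem_product]
    exact ⟨Finset.mem_image_of_mem _ hp, Finset.mem_image_of_mem _ hp⟩
  have hsum : 2 * n ≤ rows.card + cols.card := by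
    zify at hrc ⊢
    nlinarith [sq_nonneg ((rows.card : ℤ) - cols.card),
      sq_nonneg ((rows.card : ℤ) + cols.card - 2 * n), Int.ofNat_nonneg rows.card,
      Int.ofNat_nonneg cols.card, Int.ofNat_nonneg n]
  -- combine
  have hmain : G.edgeSet.ncard ≤ 2 * n * (n - 1) := by
    have h1 : G.edgeSet.ncard + 2 * n ≤ 2 * n ^ 2 := by
      rw [← hEScard]
      omega
    obtain ⟨m, rfl⟩ : ∃ m, n = m + 1 := ⟨n - 1, by omega⟩
    have h2 : 2 * (m + 1) * (m + 1 - 1) + 2 * (m + 1) = 2 * (m + 1) ^ 2 := by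
      simp only [Nat.add_sub_cancel]; ring
    omega
  refine ⟨hmain, ?_⟩
  have hle : (G.edgeSet.ncard : ℤ) ≤ 2 * n * ((n : ℤ) - 1) := by
    calc (G.edgeSet.ncard : ℤ) ≤ (2 * n * (n - 1) : ℕ) := by exact_mod_cast hmain
      _ = 2 * n * ((n : ℤ) - 1) := by
          push_cast [Nat.cast_sub hn]
          ring
  nlinarith [hle]
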